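/- For d > 1 and 0 ≤ a,b ≤ k, with m = min{min{a,k−a}, min{b,k−b}} and M = max{min{a,k−a}, min{b,k−b}}, one has the identity Σ_{j=0}^m C(k−M−j+d−1,d−1)C(j+d−1,d−1)C(m−j+d−1,d−1)C(M−m+j+d−1,d−1) − Σ_{j=0}^{m−1} C(k−M−j+d−2,d−1)C(j+d−1,d−1)C(m−j+d−2,d−1)C(M−m+j+d−1,d−1) = Σ_{j=0}^{m} C(j+d−1,d−1)·C(M−m+j+d−1,d−1)·(m−j+1)_{d−2}·(k−M−j+1)_{d−2}·(k−M+m−2j+d−1)/((d−1)!(d−2)!). -/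

import Mathlib

open Finset

/-- The rising factorial (Pochhammer symbol) `(x)_n = x(x+1)⋯(x+n−1)`. -/
def risingFac (x : ℤ) : ℕ → ℤ
  | 0 => 1
  | n + 1 => risingFac x n * (x + n)

lemma risingFac_eq (n r : ℕ) : risingFac ((n:ℤ) + 1) r = ((r.factorial * (n + r).choose r : ℕ) : ℤ) := by
  induction r with
  | zero => simp [risingFac]
  | succ r ih =>
    rw [risingFac, ih]
    have h' : ((n + r + 1 : ℕ) : ℤ) * ((n+r).choose r : ℤ) = ((n+r+1).choose (r+1) : ℤ) * (r+1) := by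
      exact_mod_cast Nat.add_one_mul_choose_eq (n + r) r
    push_cast [Nat.factorial_succ] at h' ⊢
    ring_nf
    ring_nf at h'
    nlinarith [h', sq_nonneg ((n:ℤ))]

lemma choose_key (p q e : ℕ) :
    ((((p+e+1).choose (e+1) : ℕ) : ℚ) * (((q+e+1).choose (e+1) : ℕ) : ℚ)
      - (((p+e).choose (e+1) : ℕ) : ℚ) * (((q+e).choose (e+1) : ℕ) : ℚ)) * ((e:ℚ)+1)
      = (((p+e).choose e : ℕ) : ℚ) * (((q+e).choose e : ℕ) : ℚ) * ((p:ℚ)+q+e+1) := by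
  have h1 : ((p+e+1 : ℕ) : ℚ) * (((p+e).choose e : ℕ) : ℚ)
      = (((p+e+1).choose (e+1) : ℕ) : ℚ) * ((e:ℚ)+1) := by
    exact_mod_cast Nat.add_one_mul_choose_eq (p+e) e
  have h2 : ((q+e+1 : ℕ) : ℚ) * (((q+e).choose e : ℕ) : ℚ)
      = (((q+e+1).choose (e+1) : ℕ) : ℚ) * ((e:ℚ)+1) := by
    exact_mod_cast Nat.add_one_mul_choose_eq (q+e) e
  have h3 : (((p+e).choose (e+1) : ℕ) : ℚ) * ((e:ℚ)+1) = (((p+e).choose e : ℕ) : ℚ) * (p:ℚ) := by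
    have := Nat.choose_succ_right_eq (p+e) e
    rw [Nat.add_sub_cancel] at this
    exact_mod_cast this
  have h4 : (((q+e).choose (e+1) : ℕ) : ℚ) * ((e:ℚ)+1) = (((q+e).choose e : ℕ) : ℚ) * (q:ℚ) := by
    have := Nat.choose_succ_right_eq (q+e) e
    rw [Nat.add_sub_cancel] at this
    exact_mod_cast this
  have he : ((e:ℚ)+1) ≠ 0 := by positivity
  apply mul_right_cancel₀ he
  push_cast at h1 h2 h3 h4 ⊢
  linear_combination (-(((q+e+1).choose (e+1) : ℕ) : ℚ) * ((e:ℚ)+1)) * h1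
    - (((p:ℚ)+e+1) * (((p+e).choose e : ℕ) : ℚ)) * h2
    - ((((q+e).choose (e+1) : ℕ) : ℚ) * ((e:ℚ)+1)) * h3
    - ((p:ℚ) * (((p+e).choose e : ℕ) : ℚ)) * h4

/-- For `d > 1` and `0 ≤ a,b ≤ k`, with `m = min{min{a,k−a},min{b,k−b}}` and
`M = max{min{a,k−a},min{b,k−b}}`:
`dim Hom_k^{(a,b)} − dim Hom_{k−2}^{(a−1,b−1)} = F(k,m,M,d)` in closed form. -/
theorem harm_dim_closed_form (k d a b : ℕ) (hd : 1 < d) (ha : a ≤ k) (hb : b ≤ k) :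
    (∑ j ∈ Finset.range (min (min a (k - a)) (min b (k - b)) + 1),
          (((k - max (min a (k - a)) (min b (k - b)) - j + d - 1).choose (d - 1) *
            (j + d - 1).choose (d - 1) *
            (min (min a (k - a)) (min b (k - b)) - j + d - 1).choose (d - 1) *
            (max (min a (k - a)) (min b (k - b)) -
              min (min a (k - a)) (min b (k - b)) + j + d - 1).choose (d - 1) : ℕ) : ℚ)) -
      (∑ j ∈ Finset.range (min (min a (k - a)) (min b (k - b))),
          (((k - max (min a (k - a)) (min b (k - b)) - j + d - 2).choose (d - 1) *
            (j + d - 1).choose (d - 1) *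
            (min (min a (k - a)) (min b (k - b)) - j + d - 2).choose (d - 1) *
            (max (min a (k - a)) (min b (k - b)) -
              min (min a (k - a)) (min b (k - b)) + j + d - 1).choose (d - 1) : ℕ) : ℚ)) =
    ∑ j ∈ Finset.range (min (min a (k - a)) (min b (k - b)) + 1),
        (((j + d - 1).choose (d - 1) : ℚ) *
          ((max (min a (k - a)) (min b (k - b)) -
              min (min a (k - a)) (min b (k - b)) + j + d - 1).choose (d - 1) : ℚ) *
          ((risingFac ((min (min a (k - a)) (min b (k - b)) : ℤ) - j + 1) (d - 2) : ℤ) : ℚ) *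
          ((risingFac ((k : ℤ) - max (min a (k - a)) (min b (k - b)) - j + 1) (d - 2) : ℤ) : ℚ) *
          ((k : ℚ) - max (min a (k - a)) (min b (k - b)) +
              min (min a (k - a)) (min b (k - b)) - 2 * j + d - 1)) /
        (((d - 1).factorial : ℚ) * ((d - 2).factorial : ℚ)) := by
  obtain ⟨e, rfl⟩ : ∃ e, d = e + 2 := ⟨d - 2, by omega⟩
  set m := min (min a (k - a)) (min b (k - b)) with hmdef
  set M := max (min a (k - a)) (min b (k - b)) with hMdef
  have hmM : m ≤ M := min_le_max
  have hk : m + M ≤ k := by omega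
  have hmZ : ((m:ℕ):ℤ) = min (min (a:ℤ) ((k:ℤ)-(a:ℤ))) (min (b:ℤ) ((k:ℤ)-(b:ℤ))) := by
    rw [hmdef]; push_cast [Nat.cast_sub ha, Nat.cast_sub hb]; rfl
  have hMZ : ((M:ℕ):ℤ) = max (min (a:ℤ) ((k:ℤ)-(a:ℤ))) (min (b:ℤ) ((k:ℤ)-(b:ℤ))) := by
    rw [hMdef]; push_cast [Nat.cast_sub ha, Nat.cast_sub hb]; rfl
  rw [← hmZ]
  simp only [show e + 2 - 1 = e + 1 from rfl, show e + 2 - 2 = e from rfl]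
  -- extend the second sum to range (m+1)
  have hS2 : (∑ j ∈ Finset.range (m+1),
        (((k - M - j + (e + 2) - 2).choose (e + 1) * (j + (e + 2) - 1).choose (e + 1) *
          (m - j + (e + 2) - 2).choose (e + 1) *
          (M - m + j + (e + 2) - 1).choose (e + 1) : ℕ) : ℚ))
      = ∑ j ∈ Finset.range m,
        (((k - M - j + (e + 2) - 2).choose (e + 1) * (j + (e + 2) - 1).choose (e + 1) *
          (m - j + (e + 2) - 2).choose (e + 1) *
          (M - m + j + (e + 2) - 1).choose (e + 1) : ℕ) : ℚ) := by
    rw [Finset.sum_range_succ]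
    have h0 : m - m + (e + 2) - 2 = e := by omega
    rw [h0, Nat.choose_eq_zero_of_lt (by omega : e < e + 1)]
    simp
  rw [← hS2, ← Finset.sum_sub_distrib]
  refine Finset.sum_congr rfl fun j hj => ?_
  rw [Finset.mem_range] at hj
  have hjm : j ≤ m := by omega
  set p := k - M - j with hpdef
  set q := m - j with hqdef
  have e1 : k - M - j + (e + 2) - 1 = p + e + 1 := by omega
  have e2 : j + (e + 2) - 1 = j + e + 1 := by omega
  have e3 : m - j + (e + 2) - 1 = q + e + 1 := by omega
  have e4 : M - m + j + (e + 2) - 1 = (M - m + j) + e + 1 := by omega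
  have e5 : k - M - j + (e + 2) - 2 = p + e := by omega
  have e6 : m - j + (e + 2) - 2 = q + e := by omega
  rw [e1, e2, e3, e4, e5, e6]
  have z1 : ((m:ℕ):ℤ) - (j:ℤ) + 1 = ((q:ℕ):ℤ) + 1 := by omega
  have z2 : ((k:ℕ):ℤ) - ((M:ℕ):ℤ) - (j:ℤ) + 1 = ((p:ℕ):ℤ) + 1 := by omega
  rw [z1, z2, risingFac_eq, risingFac_eq]
  have r1 : (k:ℚ) - (M:ℚ) + (m:ℚ) - 2 * (j:ℚ) + ((e+2 : ℕ):ℚ) - 1 = (p:ℚ) + (q:ℚ) + (e:ℚ) + 1 := by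
    have hp' : ((p:ℕ):ℚ) = (k:ℚ) - M - j := by
      rw [hpdef]; push_cast [Nat.cast_sub (by omega : M + j ≤ k), Nat.sub_sub]; ring
    have hq' : ((q:ℕ):ℚ) = (m:ℚ) - j := by
      rw [hqdef]; push_cast [Nat.cast_sub hjm]; ring
    rw [hp', hq']; push_cast; ring
  rw [r1]
  have hne : (((e+1).factorial : ℚ) * ((e).factorial : ℚ)) ≠ 0 := by positivity
  rw [eq_div_iff hne]
  have key := choose_key p q e
  push_cast [Nat.factorial_succ] at key ⊢
  linear_combination (((j+e+1).choose (e+1) : ℚ) * (((M - m + j)+e+1).choose (e+1) : ℚ)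
    * ((e.factorial : ℚ)) * ((e.factorial : ℚ))) * key
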